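/- Let d, n ∈ ℕ, R > 0, ξ > 0, γ ∈ (0,1], and consider the hardmax self-attention dynamics with parameter matrix A = ξ I_d. Suppose the initial configuration x_1(0), …, x_n(0) ∈ ℝ^d consists of pairwise distinct vectors and there is a subset of indices I = {i¹, …, i^m} ⊆ {1,…,n} with |I| = m such that: (i) x_i(0) ∈ (0,R)^d for all i ∉ I; (ii) x_{i¹}(0) = R·1_d (the vector with all coordinates equal to R); and (iii) x_{iʲ}(0) lies on the hypersphere { x : ‖x‖ = R } and has all coordinates strictly negative, for all j ∈ {2,…,m}. Then for every i ∉ I, x_i(k) → x_{i¹}(0) as k → ∞, while x_{iʲ}(k) = x_{iʲ}(0) for all j ∈ {1,…,m} and all k ≥ 0; that is, the dynamics converge to a partially clustered state with exactly m distinct tokens, consisting of n − m + 1 copies of x_{i¹}(0) together with x_{i²}(0), …, x_{i^m}(0). For γ = 1 convergence takes place in one step. -/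

import Mathlib

open Filter Topology Matrix

open Classical in
/-- Hardmax cluster set: indices `j` where `⟨A x_i, x_j⟩` attains its maximum over the tuple. -/
noncomputable def cluster {d n : ℕ} (X : Fin n → (Fin d → ℝ))
    (A : Matrix (Fin d) (Fin d) ℝ) (i : Fin n) : Finset (Fin n) :=
  Finset.univ.filter fun j => ∀ ℓ, A.mulVec (X i) ⬝ᵥ X ℓ ≤ A.mulVec (X i) ⬝ᵥ X j

/-- Hardmax self-attention dynamics:
`x_i(k+1) = (1−γ) x_i(k) + (γ/|C_i(X(k),A)|) Σ_{ℓ ∈ C_i(X(k),A)} x_ℓ(k)`. -/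
noncomputable def traj {d n : ℕ} (γ : ℝ) (A : Matrix (Fin d) (Fin d) ℝ)
    (X0 : Fin n → (Fin d → ℝ)) : ℕ → Fin n → (Fin d → ℝ)
  | 0 => X0
  | k + 1 => fun i =>
      (1 - γ) • traj γ A X0 k i +
        (γ / ((cluster (traj γ A X0 k) A i).card : ℝ)) •
          ∑ ℓ ∈ cluster (traj γ A X0 k) A i, traj γ A X0 k ℓ

/-- Euclidean norm on `ℝ^d` (viewed as `Fin d → ℝ`). -/
noncomputable def enorm {d : ℕ} (x : Fin d → ℝ) : ℝ :=
  Real.sqrt (∑ t, x t ^ 2)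

/-- **Partial clustering** for hardmax self-attention dynamics with `A = ξ I_d`:
given a set of `m` leaders `ι 0, …, ι (m−1)` — one at the corner `R·1_d` of the hypercube
`(0,R)^d`, the rest on the radius-`R` hypersphere with all coordinates negative — while all
remaining tokens lie inside the hypercube, the leaders stay fixed and every other token
converges to the corner leader; for `γ = 1` in one step. -/
theorem partial_clustering {d n m : ℕ} (R ξ γ : ℝ) (hR : 0 < R) (hξ : 0 < ξ)
    (hγ0 : 0 < γ) (hγ1 : γ ≤ 1) (hm : 0 < m)
    (X0 : Fin n → (Fin d → ℝ)) (hinj : Function.Injective X0)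
    (ι : Fin m → Fin n) (hι : Function.Injective ι)
    (hcube : ∀ i, i ∉ Set.range ι → ∀ t, 0 < X0 i t ∧ X0 i t < R)
    (hcorner : X0 (ι ⟨0, hm⟩) = fun _ => R)
    (hsphere : ∀ j : Fin m, j ≠ ⟨0, hm⟩ →
      _root_.enorm (X0 (ι j)) = R ∧ ∀ t, X0 (ι j) t < 0) :
    (∀ i, i ∉ Set.range ι →
      Tendsto (fun k => traj γ (ξ • (1 : Matrix (Fin d) (Fin d) ℝ)) X0 k i)
        atTop (𝓝 (X0 (ι ⟨0, hm⟩)))) ∧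
    (∀ j : Fin m, ∀ k : ℕ,
      traj γ (ξ • (1 : Matrix (Fin d) (Fin d) ℝ)) X0 k (ι j) = X0 (ι j)) ∧
    (γ = 1 → ∀ i, i ∉ Set.range ι → ∀ k, 1 ≤ k →
      traj γ (ξ • (1 : Matrix (Fin d) (Fin d) ℝ)) X0 k i = X0 (ι ⟨0, hm⟩)) := by
  classical
  set A : Matrix (Fin d) (Fin d) ℝ := ξ • (1 : Matrix (Fin d) (Fin d) ℝ) with hA
  rcases Nat.eq_zero_or_pos d with hd | hd
  · subst hd
    have hsub : ∀ x y : Fin 0 → ℝ, x = y := fun x y => funext fun t => t.elim0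
    refine ⟨fun i _ => ?_, fun j k => hsub _ _, fun _ i _ k _ => hsub _ _⟩
    have hfk : (fun k => traj γ A X0 k i) = fun _ => X0 (ι ⟨0, hm⟩) :=
      funext fun k => hsub _ _
    rw [hfk]; exact tendsto_const_nhds
  have hne : (Finset.univ : Finset (Fin d)).Nonempty := by
    rw [Finset.univ_nonempty_iff]
    exact Fin.pos_iff_nonempty.mp hd
  set c : Fin n := ι ⟨0, hm⟩ with hc
  set corner : Fin d → ℝ := fun _ => R with hcornerdef
  have hdot : ∀ v w : Fin d → ℝ, A.mulVec v ⬝ᵥ w = ξ * (v ⬝ᵥ w) := by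
    intro v w
    rw [hA, Matrix.smul_mulVec, Matrix.one_mulVec, smul_dotProduct, smul_eq_mul]
  have hclmem : ∀ (X : Fin n → Fin d → ℝ) (i j : Fin n),
      j ∈ cluster X A i ↔ ∀ ℓ, X i ⬝ᵥ X ℓ ≤ X i ⬝ᵥ X j := by
    intro X i j
    simp only [cluster, Finset.mem_filter, Finset.mem_univ, true_and, hdot]
    exact forall_congr' fun ℓ => mul_le_mul_iff_right₀ hξ
  -- leaders on the sphere have self-inner-product R^2
  have hsq : ∀ j : Fin m, j ≠ ⟨0, hm⟩ → X0 (ι j) ⬝ᵥ X0 (ι j) = R ^ 2 := by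
    intro j hj
    have h1 := (hsphere j hj).1
    have h2 : ∑ t, X0 (ι j) t ^ 2 = R ^ 2 := by
      have h3 := congrArg (· ^ 2) h1
      simpa [_root_.enorm, Real.sq_sqrt (Finset.sum_nonneg fun t _ => sq_nonneg (X0 (ι j) t))]
        using h3
    simpa [dotProduct, pow_two] using h2
  -- elementary strict Cauchy–Schwarz for distinct points on the sphere
  have hCS : ∀ x y : Fin d → ℝ, x ⬝ᵥ x = R ^ 2 → y ⬝ᵥ y = R ^ 2 → x ≠ y →
      x ⬝ᵥ y < R ^ 2 := by
    intro x y hx hy hxy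
    have h0 : 0 < (x - y) ⬝ᵥ (x - y) := by
      have hnn : 0 ≤ (x - y) ⬝ᵥ (x - y) :=
        Finset.sum_nonneg fun t _ => mul_self_nonneg _
      rcases hnn.lt_or_eq with h | h
      · exact h
      · exfalso
        have : x - y = 0 := (dotProduct_self_eq_zero).mp h.symm
        exact hxy (sub_eq_zero.mp this)
    have hexp : (x - y) ⬝ᵥ (x - y) = x ⬝ᵥ x - 2 * (x ⬝ᵥ y) + y ⬝ᵥ y := by
      rw [sub_dotProduct, dotProduct_sub, dotProduct_sub,
        dotProduct_comm y x]
      ring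
    rw [hexp, hx, hy] at h0
    linarith
  -- the one-step analysis
  have step : ∀ X : Fin n → Fin d → ℝ,
      (∀ j, X (ι j) = X0 (ι j)) →
      (∀ i, i ∉ Set.range ι → ∀ t, 0 < X i t ∧ X i t ≤ R) →
      (∀ i, (∀ t, 0 < X i t ∧ X i t ≤ R) →
        (γ / ((cluster X A i).card : ℝ)) • ∑ ℓ ∈ cluster X A i, X ℓ = γ • corner) ∧
      (∀ j : Fin m, j ≠ ⟨0, hm⟩ →
        (γ / ((cluster X A (ι j)).card : ℝ)) • ∑ ℓ ∈ cluster X A (ι j), X ℓ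
          = γ • X (ι j)) := by
    intro X hlead hco
    have hXc : X c = corner := by rw [hc, hlead ⟨0, hm⟩, hcorner]
    -- trichotomy for tokens
    have P : ∀ ℓ : Fin n, (∀ t, 0 < X ℓ t ∧ X ℓ t ≤ R) ∨
        (∃ j : Fin m, j ≠ ⟨0, hm⟩ ∧ ℓ = ι j) := by
      intro ℓ
      by_cases hℓ : ℓ ∈ Set.range ι
      · obtain ⟨j, rfl⟩ := hℓ
        by_cases hj : j = ⟨0, hm⟩
        · subst hj
          left; intro t
          rw [show ι ⟨0, hm⟩ = c from rfl, hXc]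
          exact ⟨hR, le_refl R⟩
        · right; exact ⟨j, hj, rfl⟩
      · left; exact hco ℓ hℓ
    -- tokens with positive coordinates: the unique maximizer direction is `corner`
    have Cpos : ∀ v : Fin d → ℝ, (∀ t, 0 < v t ∧ v t ≤ R) → ∀ ℓ,
        X ℓ ≠ corner → v ⬝ᵥ X ℓ < v ⬝ᵥ corner := by
      intro v hv ℓ hℓ
      have hvc : v ⬝ᵥ corner = ∑ t, v t * R := by
        simp [dotProduct, hcornerdef]
      rcases P ℓ with h | ⟨j, hj, rfl⟩
      · obtain ⟨t0, ht0⟩ : ∃ t0, X ℓ t0 ≠ R := by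
          by_contra hall
          push_neg at hall
          exact hℓ (funext fun t => hall t)
        have ht0' : X ℓ t0 < R := lt_of_le_of_ne (h t0).2 ht0
        rw [hvc]
        refine Finset.sum_lt_sum (fun t _ => ?_) ⟨t0, Finset.mem_univ t0, ?_⟩
        · exact mul_le_mul_of_nonneg_left (h t).2 (hv t).1.le
        · exact mul_lt_mul_of_pos_left ht0' (hv t0).1
      · have hneg : v ⬝ᵥ X (ι j) < 0 := by
          apply Finset.sum_neg (fun t _ => ?_) hne
          rw [hlead j]
          exact mul_neg_of_pos_of_neg (hv t).1 ((hsphere j hj).2 t)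
        have hpos : 0 < v ⬝ᵥ corner := by
          rw [hvc]
          exact Finset.sum_pos (fun t _ => mul_pos (hv t).1 hR) hne
        exact hneg.trans hpos
    constructor
    · -- positive tokens: cluster = tokens at the corner, average = corner
      intro i hv
      have hcl : cluster X A i = Finset.univ.filter fun ℓ => X ℓ = corner := by
        ext ℓ
        rw [hclmem]
        simp only [Finset.mem_filter, Finset.mem_univ, true_and]
        constructor
        · intro h
          by_contra hne'
          have h1 := h c
          rw [hXc] at h1
          exact absurd h1 (not_le.mpr (Cpos (X i) hv ℓ hne'))
        · intro heq ℓ'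
          rw [heq, ← hXc]
          by_cases h' : X ℓ' = corner
          · rw [hXc, h']
          · rw [hXc]
            exact (Cpos (X i) hv ℓ' h').le
      have hcmem : c ∈ Finset.univ.filter fun ℓ => X ℓ = corner := by
        simp [hXc]
      have hcard : ((Finset.univ.filter fun ℓ => X ℓ = corner).card : ℝ) ≠ 0 := by
        simp only [ne_eq, Nat.cast_eq_zero, Finset.card_eq_zero]
        exact fun h => by simp [h] at hcmem
      rw [hcl]
      have hsum : ∑ ℓ ∈ Finset.univ.filter (fun ℓ => X ℓ = corner), X ℓ
          = (Finset.univ.filter fun ℓ => X ℓ = corner).card • corner := by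
        rw [Finset.sum_congr rfl fun ℓ hℓ => (Finset.mem_filter.mp hℓ).2,
          Finset.sum_const]
      rw [hsum, ← Nat.cast_smul_eq_nsmul ℝ, smul_smul, div_mul_cancel₀ _ hcard]
    · -- negative leaders: cluster is the singleton
      intro j hj
      have hself : X (ι j) ⬝ᵥ X (ι j) = R ^ 2 := by rw [hlead j]; exact hsq j hj
      have hother : ∀ ℓ, ℓ ≠ ι j → X (ι j) ⬝ᵥ X ℓ < R ^ 2 := by
        intro ℓ hℓ
        rcases P ℓ with h | ⟨j', hj', rfl⟩
        · have hneg : X (ι j) ⬝ᵥ X ℓ < 0 := by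
            apply Finset.sum_neg (fun t _ => ?_) hne
            have := (hsphere j hj).2 t
            rw [hlead j]
            exact mul_neg_of_neg_of_pos this (h t).1
          exact hneg.trans (by positivity)
        · have hjj' : j' ≠ j := fun h => hℓ (by rw [h])
          rw [hlead j, hlead j']
          exact hCS _ _ (hsq j hj) (hsq j' hj') (hinj.ne (hι.ne (Ne.symm hjj')))
      have hcl : cluster X A (ι j) = {ι j} := by
        ext ℓ
        rw [hclmem, Finset.mem_singleton]
        constructor
        · intro h
          by_contra hℓ
          have h1 := h (ι j)
          rw [hself] at h1
          exact absurd h1 (not_le.mpr (hother ℓ hℓ))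
        · rintro rfl ℓ'
          rw [hself]
          by_cases h' : ℓ' = ι j
          · rw [h', hself]
          · exact (hother ℓ' h').le
      rw [hcl]
      simp
  -- the main invariant and closed form
  have main : ∀ k, (∀ j, traj γ A X0 k (ι j) = X0 (ι j)) ∧
      (∀ i, i ∉ Set.range ι → ∀ t, 0 < traj γ A X0 k i t ∧ traj γ A X0 k i t ≤ R) ∧
      (∀ i, i ∉ Set.range ι →
        traj γ A X0 k i = corner + (1 - γ) ^ k • (X0 i - corner)) := by
    intro k
    induction k with
    | zero =>
      refine ⟨fun j => rfl, fun i hi t => ⟨(hcube i hi t).1, (hcube i hi t).2.le⟩,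
        fun i hi => ?_⟩
      rw [pow_zero, one_smul]
      abel
    | succ k ih =>
      obtain ⟨hl, hco, hcf⟩ := ih
      obtain ⟨s1, s2⟩ := step (traj γ A X0 k) hl hco
      have hXc : traj γ A X0 k c = corner := by rw [hc, hl ⟨0, hm⟩, hcorner]
      have hupd : ∀ i, i ∉ Set.range ι →
          traj γ A X0 (k + 1) i = (1 - γ) • traj γ A X0 k i + γ • corner := by
        intro i hi
        show (1 - γ) • traj γ A X0 k i + _ • _ = _
        rw [s1 i (hco i hi)]
      refine ⟨fun j => ?_, fun i hi t => ?_, fun i hi => ?_⟩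
      · by_cases hj : j = ⟨0, hm⟩
        · subst hj
          show (1 - γ) • traj γ A X0 k (ι ⟨0, hm⟩) + _ • _ = _
          rw [show ι (⟨0, hm⟩ : Fin m) = c from rfl,
            s1 c (by rw [hXc]; exact fun t => ⟨hR, le_refl R⟩), hXc, hcorner]
          module
        · show (1 - γ) • traj γ A X0 k (ι j) + _ • _ = _
          rw [s2 j hj, hl j]
          module
      · rw [hupd i hi]
        have hx := hco i hi t
        have h1γ : 0 ≤ 1 - γ := by linarith
        simp only [Pi.add_apply, Pi.smul_apply, smul_eq_mul, hcornerdef]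
        constructor
        · have : 0 ≤ (1 - γ) * traj γ A X0 k i t := mul_nonneg h1γ hx.1.le
          nlinarith
        · nlinarith [mul_le_mul_of_nonneg_left hx.2 h1γ]
      · rw [hupd i hi, hcf i hi, pow_succ]
        module
  refine ⟨fun i hi => ?_, fun j k => (main k).1 j, ?_⟩
  · have h1 : Tendsto (fun k : ℕ => (1 - γ) ^ k) atTop (𝓝 0) :=
      tendsto_pow_atTop_nhds_zero_of_lt_one (by linarith) (by linarith)
    have h2 : Tendsto (fun k => corner + (1 - γ) ^ k • (X0 i - corner)) atTop
        (𝓝 (corner + (0 : ℝ) • (X0 i - corner))) :=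
      tendsto_const_nhds.add (h1.smul_const _)
    rw [zero_smul, add_zero] at h2
    rw [show X0 (ι ⟨0, hm⟩) = corner from hcorner]
    exact h2.congr fun k => ((main k).2.2 i hi).symm
  · rintro rfl i hi k hk
    rw [(main k).2.2 i hi, show X0 (ι ⟨0, hm⟩) = corner from hcorner]
    have hk0 : k ≠ 0 := by omega
    simp [sub_self, zero_pow hk0]
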